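/- arXiv:1411.6860 — 2 statements merged into one kernel-verified Lean document; each statement's English description precedes it below -/
import Mathlib

section
/- Let η_i = π^{2q}(i−q)^{2q}/n for i = q+1,…, and let q > 1/2, l ∈ ℕ with l > 1/(2q), m ∈ ℕ ∪ {0}. Then as λ → 0, λ^{1/(2q)} · Σ_{i=q+1}^∞ (λ n η_i)^m / (1 + λ n η_i)^{m+l} → κ_q(m,l), where κ_q(m,l) = Γ(m+1/(2q)) Γ(l−1/(2q)) / (2πq Γ(l+m)). -/
open Filter Real MeasureTheory Set

noncomputable def rsG (q : ℝ) (m l : ℕ) (x : ℝ) : ℝ :=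
  (x ^ (2*q)) ^ m / (1 + x ^ (2*q)) ^ (m + l)

lemma rsG_nonneg {q : ℝ} {m l : ℕ} {x : ℝ} (hx : 0 ≤ x) : 0 ≤ rsG q m l x := by
  unfold rsG
  have h1 : (0:ℝ) ≤ x ^ (2*q) := Real.rpow_nonneg hx _
  positivity

lemma rsG_le_one {q : ℝ} {m l : ℕ} {x : ℝ} (hx : 0 ≤ x) : rsG q m l x ≤ 1 := by
  unfold rsG
  have h1 : (0:ℝ) ≤ x ^ (2*q) := Real.rpow_nonneg hx _
  have h2 : (0:ℝ) < 1 + x ^ (2*q) := by linarith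
  rw [div_le_one (by positivity)]
  calc (x ^ (2*q)) ^ m ≤ (1 + x ^ (2*q)) ^ m := pow_le_pow_left₀ h1 (by linarith) m
    _ ≤ (1 + x ^ (2*q)) ^ (m + l) := pow_le_pow_right₀ (by linarith) (Nat.le_add_right m l)

lemma rsG_le_rpow {q : ℝ} {m l : ℕ} {x : ℝ} (hq : 0 < q) (hx : 0 < x) :
    rsG q m l x ≤ x ^ (-(2*q*(l:ℝ))) := by
  have h1 : (0:ℝ) < x ^ (2*q) := Real.rpow_pos_of_pos hx _
  have h2 : (0:ℝ) < 1 + x ^ (2*q) := by linarith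
  have key : rsG q m l x ≤ (x ^ (2*q)) ^ m / (x ^ (2*q)) ^ (m + l) := by
    unfold rsG
    apply div_le_div_of_nonneg_left (by positivity) (by positivity)
    exact pow_le_pow_left₀ h1.le (by linarith) _
  refine key.trans_eq ?_
  rw [pow_add, ← div_div, div_self (by positivity), one_div, ← Real.rpow_natCast (x ^ (2*q)) l,
    ← Real.rpow_mul hx.le, ← Real.rpow_neg hx.le]

lemma rsG_measurable {q : ℝ} (hq : 0 < q) (m l : ℕ) : Measurable (rsG q m l) := by
  unfold rsG
  have hc : Continuous (fun x : ℝ => x ^ (2*q)) := Real.continuous_rpow_const (by linarith)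
  exact ((hc.pow m).measurable).div (((continuous_const.add hc).pow (m+l)).measurable)

lemma rsG_continuousAt {q : ℝ} {m l : ℕ} {x : ℝ} (hx : 0 < x) :
    ContinuousAt (rsG q m l) x := by
  have h1 : ContinuousAt (fun y : ℝ => y ^ (2*q)) x :=
    Real.continuousAt_rpow_const x _ (Or.inl hx.ne')
  have h2 : (0:ℝ) < x ^ (2*q) := Real.rpow_pos_of_pos hx _
  exact (h1.pow m).div ((continuousAt_const.add h1).pow (m+l)) (by positivity)

noncomputable def rsH (c : ℝ) (x : ℝ) : ℝ := (max x 1) ^ (-c)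

lemma rsH_continuous (c : ℝ) : Continuous (rsH c) := by
  unfold rsH
  rw [continuous_iff_continuousAt]
  intro x
  have h1 : ContinuousAt (fun y : ℝ => y ^ (-c)) (max x 1) :=
    Real.continuousAt_rpow_const _ _ (Or.inl (by positivity))
  have h2 : ContinuousAt (fun y : ℝ => max y 1) x :=
    (continuous_id.max continuous_const).continuousAt
  exact ContinuousAt.comp (g := fun y : ℝ => y ^ (-c)) h1 h2

lemma rsH_nonneg (c : ℝ) (x : ℝ) : 0 ≤ rsH c x := Real.rpow_nonneg (by positivity) _

lemma rsG_bound {q : ℝ} {m l : ℕ} {x y : ℝ} (hq : 0 < q) (hx : 0 < x) (hxy : x ≤ y) :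
    rsG q m l y ≤ rsH (2*q*(l:ℝ)) x := by
  unfold rsH
  rcases le_total x 1 with h | h
  · rw [max_eq_right h, Real.one_rpow]
    exact rsG_le_one (by linarith)
  · rw [max_eq_left h]
    refine (rsG_le_rpow hq (by linarith)).trans ?_
    exact Real.rpow_le_rpow_of_nonpos hx hxy (by simp only [neg_nonpos]; positivity)

lemma rsH_integrableOn {c : ℝ} (hc : 1 < c) : IntegrableOn (rsH c) (Set.Ioi (0:ℝ)) := by
  have hmeas : AEStronglyMeasurable (rsH c) (volume.restrict (Set.Ioi (0:ℝ))) :=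
    ((rsH_continuous c).measurable.aestronglyMeasurable).restrict
  rw [← Set.Ioc_union_Ioi_eq_Ioi (zero_le_one (α := ℝ))]
  refine IntegrableOn.union ?_ ?_
  · refine Integrable.mono' (g := fun _ => (1:ℝ)) ?_ ((rsH_continuous c).measurable.aestronglyMeasurable).restrict ?_
    · exact integrableOn_const measure_Ioc_lt_top.ne
    · refine Filter.Eventually.of_forall fun x => ?_
      rw [Real.norm_of_nonneg (rsH_nonneg c x)]
      exact Real.rpow_le_one_of_one_le_of_nonpos (le_max_right _ _) (by linarith)
  · refine Integrable.mono' (g := fun x => x ^ (-c)) ?_ ((rsH_continuous c).measurable.aestronglyMeasurable).restrict ?_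
    · exact integrableOn_Ioi_rpow_of_lt (by linarith) one_pos
    · filter_upwards [MeasureTheory.ae_restrict_mem measurableSet_Ioi] with x hx
      rw [Real.norm_of_nonneg (rsH_nonneg c x), rsH, max_eq_left (le_of_lt hx)]

lemma rs_ceil_lower {t x : ℝ} (ht : 0 < t) : x ≤ t * (⌈x/t⌉ : ℤ) := by
  have := Int.le_ceil (x/t)
  calc x = t * (x/t) := by field_simp
    _ ≤ t * (⌈x/t⌉ : ℤ) := by
        exact mul_le_mul_of_nonneg_left this ht.le

lemma rs_ceil_upper {t x : ℝ} (ht : 0 < t) : t * (⌈x/t⌉ : ℤ) ≤ x + t := by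
  have h := (Int.ceil_lt_add_one (x/t)).le
  calc t * (⌈x/t⌉ : ℤ) ≤ t * (x/t + 1) := mul_le_mul_of_nonneg_left h ht.le
    _ = x + t := by field_simp

lemma rs_riemann {q : ℝ} (hq : 1/2 < q) {m l : ℕ} (hl' : 1/(2*q) < (l:ℝ)) :
    Tendsto (fun t : ℝ => t * ∑' j : ℕ, rsG q m l (((j:ℝ)+1)*t))
      (nhdsWithin 0 (Set.Ioi 0)) (nhds (∫ x in Set.Ioi (0:ℝ), rsG q m l x)) := by
  have hq0 : 0 < q := by linarith
  have h2q : (0:ℝ) < 2*q := by linarith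
  have hc : 1 < 2*q*(l:ℝ) := by
    have h1 : 1 / (2*q) * (2*q) < (l:ℝ) * (2*q) := mul_lt_mul_of_pos_right hl' h2q
    rw [one_div, inv_mul_cancel₀ (ne_of_gt h2q)] at h1
    nlinarith
  set c := 2*q*(l:ℝ) with hcdef
  set F : ℝ → ℝ → ℝ := fun t x => rsG q m l (t * (⌈x/t⌉ : ℤ)) with hF
  -- measurability
  have hFmeas : ∀ t : ℝ, Measurable (F t) := by
    intro t
    have h1 : Measurable fun x : ℝ => t * ((⌈x/t⌉ : ℤ) : ℝ) :=
      measurable_const.mul ((measurable_from_top).comp ((measurable_id.div_const t).ceil))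
    exact (rsG_measurable hq0 m l).comp h1
  -- bound
  have hFbound : ∀ t ∈ Set.Ioi (0:ℝ), ∀ x ∈ Set.Ioi (0:ℝ), ‖F t x‖ ≤ rsH c x := by
    intro t ht x hx
    have hxy : x ≤ t * (⌈x/t⌉ : ℤ) := rs_ceil_lower ht
    have hy : (0:ℝ) < t * (⌈x/t⌉ : ℤ) := lt_of_lt_of_le hx hxy
    rw [hF]
    simp only
    rw [Real.norm_of_nonneg (rsG_nonneg hy.le)]
    exact rsG_bound hq0 hx hxy
  -- dominated convergence
  have hTend : Tendsto (fun t : ℝ => ∫ x in Set.Ioi (0:ℝ), F t x)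
      (nhdsWithin 0 (Set.Ioi 0)) (nhds (∫ x in Set.Ioi (0:ℝ), rsG q m l x)) := by
    refine MeasureTheory.tendsto_integral_filter_of_dominated_convergence (rsH c) ?_ ?_
      (rsH_integrableOn hc) ?_
    · filter_upwards [self_mem_nhdsWithin] with t ht
      exact ((hFmeas t).aestronglyMeasurable).restrict
    · filter_upwards [self_mem_nhdsWithin] with t ht
      filter_upwards [MeasureTheory.ae_restrict_mem measurableSet_Ioi] with x hx
      exact hFbound t ht x hx
    · filter_upwards [MeasureTheory.ae_restrict_mem measurableSet_Ioi] with x hx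
      have hy : Tendsto (fun t : ℝ => t * (⌈x/t⌉ : ℤ)) (nhdsWithin 0 (Set.Ioi 0)) (nhds x) := by
        refine tendsto_of_tendsto_of_tendsto_of_le_of_le' (g := fun _ => x)
          (h := fun t => x + t) tendsto_const_nhds ?_ ?_ ?_
        · have : Tendsto (fun t : ℝ => x + t) (nhdsWithin 0 (Set.Ioi 0)) (nhds (x + 0)) :=
            tendsto_const_nhds.add (tendsto_id.mono_left nhdsWithin_le_nhds)
          rwa [add_zero] at this
        · filter_upwards [self_mem_nhdsWithin] with t ht
          exact rs_ceil_lower ht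
        · filter_upwards [self_mem_nhdsWithin] with t ht
          exact rs_ceil_upper ht
      exact ((rsG_continuousAt hx).tendsto).comp hy
  -- identify the integral with the sum for t > 0
  refine hTend.congr' ?_
  filter_upwards [self_mem_nhdsWithin] with t ht
  have hU : Set.Ioi (0:ℝ) = ⋃ j : ℕ, Set.Ioc ((j:ℝ)*t) (((j:ℝ)+1)*t) := by
    ext y
    simp only [Set.mem_Ioi, Set.mem_iUnion, Set.mem_Ioc]
    constructor
    · intro hy
      have hyt : 0 < y / t := div_pos hy ht
      have h0 : (0:ℤ) < ⌈y/t⌉ := Int.lt_ceil.mpr (by exact_mod_cast hyt)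
      have hk1 : (1:ℤ) ≤ ⌈y/t⌉ := h0
      refine ⟨(⌈y/t⌉ - 1).toNat, ?_, ?_⟩
      · have hcast : (((⌈y/t⌉ - 1).toNat : ℝ)) = (⌈y/t⌉ : ℝ) - 1 := by
          rw [← Int.cast_natCast, Int.toNat_of_nonneg (by omega)]
          push_cast; ring
        rw [hcast]
        have := Int.ceil_lt_add_one (y/t)
        have h2 : (⌈y/t⌉ : ℝ) - 1 < y / t := by linarith
        calc ((⌈y/t⌉:ℝ) - 1) * t < (y/t) * t := by
              exact mul_lt_mul_of_pos_right h2 ht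
          _ = y := div_mul_cancel₀ y (ne_of_gt ht)
      · have hcast : (((⌈y/t⌉ - 1).toNat : ℝ)) + 1 = (⌈y/t⌉ : ℝ) := by
          rw [← Int.cast_natCast, Int.toNat_of_nonneg (by omega)]
          push_cast; ring
        rw [hcast]
        calc y = (y/t) * t := (div_mul_cancel₀ y (ne_of_gt ht)).symm
          _ ≤ (⌈y/t⌉:ℝ) * t := mul_le_mul_of_nonneg_right (Int.le_ceil _) ht.le
    · rintro ⟨j, hj1, hj2⟩
      have : (0:ℝ) ≤ (j:ℝ) * t := mul_nonneg (Nat.cast_nonneg j) (le_of_lt ht)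
      linarith
  have hdisj : Pairwise (Function.onFun Disjoint
      (fun j : ℕ => Set.Ioc ((j:ℝ)*t) (((j:ℝ)+1)*t))) := by
    intro i j hij
    rw [Function.onFun, Set.Ioc_disjoint_Ioc]
    rcases lt_or_gt_of_ne hij with h | h
    · have : ((i:ℝ)+1) * t ≤ (j:ℝ) * t := by
        have h2 : ((i:ℝ)+1) ≤ (j:ℝ) := by exact_mod_cast h
        exact mul_le_mul_of_nonneg_right h2 (le_of_lt ht)
      exact le_trans (min_le_left _ _) (le_trans this (le_max_right _ _))
    · have : ((j:ℝ)+1) * t ≤ (i:ℝ) * t := by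
        have h2 : ((j:ℝ)+1) ≤ (i:ℝ) := by exact_mod_cast h
        exact mul_le_mul_of_nonneg_right h2 (le_of_lt ht)
      exact le_trans (min_le_right _ _) (le_trans this (le_max_left _ _))
  have hint : IntegrableOn (F t) (Set.Ioi (0:ℝ)) := by
    refine Integrable.mono' (rsH_integrableOn hc) ((hFmeas t).aestronglyMeasurable).restrict ?_
    filter_upwards [MeasureTheory.ae_restrict_mem measurableSet_Ioi] with x hx
    exact hFbound t ht x hx
  have hval : ∀ j : ℕ, ∫ x in Set.Ioc ((j:ℝ)*t) (((j:ℝ)+1)*t), F t x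
      = rsG q m l (((j:ℝ)+1)*t) * t := by
    intro j
    have hconst : ∀ x ∈ Set.Ioc ((j:ℝ)*t) (((j:ℝ)+1)*t), F t x = rsG q m l (((j:ℝ)+1)*t) := by
      intro x hx
      have hceil : ⌈x/t⌉ = (j:ℤ) + 1 := by
        rw [Int.ceil_eq_iff]
        constructor
        · push_cast
          rw [lt_div_iff₀ ht]
          have := hx.1
          push_cast at this ⊢
          linarith
        · rw [div_le_iff₀ ht]
          have := hx.2
          push_cast at this ⊢
          linarith
      rw [hF]
      simp only
      rw [hceil]
      push_cast
      ring_nf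
    rw [MeasureTheory.setIntegral_congr_fun measurableSet_Ioc hconst,
      MeasureTheory.setIntegral_const, measureReal_def, Real.volume_Ioc, smul_eq_mul, mul_comm]
    congr 1
    rw [show ((j:ℝ)+1)*t - (j:ℝ)*t = t by ring, ENNReal.toReal_ofReal ht.le]
  rw [hU] at hint ⊢
  rw [MeasureTheory.integral_iUnion (fun _ => measurableSet_Ioc) hdisj hint]
  simp_rw [hval]
  rw [tsum_mul_right, mul_comm]

lemma rs_beta {a b : ℝ} (ha : 0 < a) (hb : 0 < b) :
    ∫ x in Set.Ioo (0:ℝ) 1, x ^ (a-1) * (1-x) ^ (b-1)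
      = Real.Gamma a * Real.Gamma b / Real.Gamma (a+b) := by
  have hG : 0 < Real.Gamma (a+b) := Real.Gamma_pos_of_pos (by linarith)
  have hcplx := Complex.Gamma_mul_Gamma_eq_betaIntegral (s := (a:ℂ)) (t := (b:ℂ))
    (by simpa using ha) (by simpa using hb)
  have hioo : (∫ x in Set.Ioo (0:ℝ) 1, x ^ (a-1) * (1-x) ^ (b-1))
      = ∫ x in (0:ℝ)..1, x ^ (a-1) * (1-x) ^ (b-1) := by
    rw [intervalIntegral.integral_of_le zero_le_one, MeasureTheory.integral_Ioc_eq_integral_Ioo]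
  have hbeta : Complex.betaIntegral (a:ℂ) (b:ℂ)
      = ((∫ x in Set.Ioo (0:ℝ) 1, x ^ (a-1) * (1-x) ^ (b-1) : ℝ) : ℂ) := by
    rw [hioo, Complex.betaIntegral, ← intervalIntegral.integral_ofReal]
    apply intervalIntegral.integral_congr
    intro x hx
    rw [Set.uIcc_of_le (zero_le_one)] at hx
    have hx0 : (0:ℝ) ≤ x := hx.1
    have hx1 : (0:ℝ) ≤ 1 - x := by linarith [hx.2]
    simp only [Complex.ofReal_mul]
    rw [Complex.ofReal_cpow hx0, Complex.ofReal_cpow hx1]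
    push_cast
    ring
  rw [Complex.Gamma_ofReal, Complex.Gamma_ofReal, hbeta] at hcplx
  have hab : ((a:ℂ) + (b:ℂ)) = ((a+b : ℝ) : ℂ) := by push_cast; ring
  rw [hab, Complex.Gamma_ofReal] at hcplx
  have hreal : Real.Gamma a * Real.Gamma b
      = Real.Gamma (a+b) * ∫ x in Set.Ioo (0:ℝ) 1, x ^ (a-1) * (1-x) ^ (b-1) := by
    exact_mod_cast hcplx
  field_simp
  linarith [hreal]

lemma rs_subst {a b : ℝ} (ha : 0 < a) (hb : 0 < b) {n : ℕ} (hn : (n:ℝ) = a + b) :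
    ∫ u in Set.Ioi (0:ℝ), u ^ (a-1) / (1+u) ^ n
      = ∫ x in Set.Ioo (0:ℝ) 1, x ^ (a-1) * (1-x) ^ (b-1) := by
  set φ : ℝ → ℝ := fun x => x / (1-x) with hφ
  set φ' : ℝ → ℝ := fun x => ((1-x)^2)⁻¹ with hφ'
  have hderiv : ∀ x ∈ Set.Ioo (0:ℝ) 1, HasDerivWithinAt φ (φ' x) (Set.Ioo 0 1) x := by
    intro x hx
    have h1x : (1:ℝ) - x ≠ 0 := by have := hx.2; intro h; simp only [Set.mem_Ioo] at hx; linarith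
    have : HasDerivAt φ ((1 * (1-x) - x * (0 - 1)) / (1-x)^2) x :=
      (hasDerivAt_id x).div ((hasDerivAt_const x 1).sub (hasDerivAt_id x)) h1x
    have heq : (1 * (1-x) - x * (0 - 1)) / (1-x)^2 = φ' x := by
      rw [hφ']; field_simp; ring
    rw [heq] at this
    exact this.hasDerivWithinAt
  have hinj : Set.InjOn φ (Set.Ioo 0 1) := by
    intro x hx y hy hxy
    simp only [Set.mem_Ioo] at hx hy
    rw [hφ] at hxy
    simp only at hxy
    have h1x : (1:ℝ) - x ≠ 0 := by intro h; linarith [hx.2]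
    have h1y : (1:ℝ) - y ≠ 0 := by intro h; linarith [hy.2]
    field_simp at hxy
    nlinarith [hxy]
  have himg : φ '' Set.Ioo 0 1 = Set.Ioi (0:ℝ) := by
    ext u
    simp only [Set.mem_image, Set.mem_Ioo, Set.mem_Ioi]
    constructor
    · rintro ⟨x, ⟨hx0, hx1⟩, rfl⟩
      exact div_pos hx0 (by linarith)
    · intro hu
      refine ⟨u / (1+u), ⟨div_pos hu (by linarith), ?_⟩, ?_⟩
      · rw [div_lt_one (by linarith)]; linarith
      · rw [hφ]
        simp only
        rw [div_eq_iff (by intro h; rw [sub_eq_zero] at h; nlinarith [div_lt_one (show (0:ℝ) < 1 + u by linarith) |>.mpr (show u < 1 + u by linarith)])]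
        field_simp; ring
  rw [← himg, MeasureTheory.integral_image_eq_integral_abs_deriv_smul measurableSet_Ioo hderiv hinj]
  apply MeasureTheory.setIntegral_congr_fun measurableSet_Ioo
  intro x hx
  simp only [Set.mem_Ioo] at hx
  have hx0 : 0 < x := hx.1
  have h1x : 0 < 1 - x := by linarith [hx.2]
  simp only [smul_eq_mul, hφ, hφ']
  have e1 : 1 + x / (1-x) = (1-x)⁻¹ := by field_simp; ring
  rw [e1, abs_of_pos (by positivity)]
  rw [inv_pow, Real.div_rpow hx0.le h1x.le, div_inv_eq_mul]
  have e2 : ((1-x) ^ n : ℝ) = (1-x) ^ (a + b) := by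
    rw [← Real.rpow_natCast (1-x) n, hn]
  have e3 : (((1-x)^2 : ℝ))⁻¹ = (1-x) ^ (-2:ℝ) := by
    rw [Real.rpow_neg h1x.le, ← Real.rpow_natCast (1-x) 2]; norm_num
  rw [e2, e3, div_mul_eq_mul_div, mul_div_assoc, ← Real.rpow_sub h1x, mul_comm ((1-x) ^ (-2:ℝ)),
    mul_assoc, ← Real.rpow_add h1x]
  congr 1
  ring

lemma rs_integral {q : ℝ} (hq : 1/2 < q) {m l : ℕ} (hl : 1 ≤ l) (hl' : 1/(2*q) < (l:ℝ)) :
    ∫ x in Set.Ioi (0:ℝ), rsG q m l x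
      = Real.Gamma ((m:ℝ) + 1/(2*q)) * Real.Gamma ((l:ℝ) - 1/(2*q)) /
        (2 * q * Real.Gamma ((l:ℝ) + (m:ℝ))) := by
  have h2q : (0:ℝ) < 2*q := by linarith
  set a : ℝ := (m:ℝ) + 1/(2*q) with ha_def
  set b : ℝ := (l:ℝ) - 1/(2*q) with hb_def
  have ha : 0 < a := by rw [ha_def]; positivity
  have hb : 0 < b := by rw [hb_def]; linarith
  have hn : ((m+l : ℕ):ℝ) = a + b := by rw [ha_def, hb_def]; push_cast; ring
  have h1 := MeasureTheory.integral_comp_rpow_Ioi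
    (fun u => u ^ (a-1) / (1+u) ^ (m+l)) (p := 2*q) (ne_of_gt h2q)
  have h2 : ∀ x ∈ Set.Ioi (0:ℝ),
      (|2*q| * x^(2*q-1)) • ((fun u => u ^ (a-1) / (1+u) ^ (m+l)) (x^(2*q)))
        = (2*q) * rsG q m l x := by
    intro x hx
    have hx0 : (0:ℝ) < x := hx
    simp only [smul_eq_mul]
    unfold rsG
    rw [abs_of_pos h2q, ← Real.rpow_natCast (x ^ (2*q)) m, ← Real.rpow_mul hx0.le,
      ← Real.rpow_mul hx0.le, mul_assoc, ← mul_div_assoc, ← Real.rpow_add hx0]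
    rw [show 2*q-1+2*q*(a-1) = 2*q*(m:ℝ) by rw [ha_def]; field_simp; ring]
  rw [MeasureTheory.setIntegral_congr_fun measurableSet_Ioi h2] at h1
  rw [MeasureTheory.integral_const_mul] at h1
  rw [rs_subst ha hb hn, rs_beta ha hb] at h1
  have hG : 0 < Real.Gamma (a+b) := Real.Gamma_pos_of_pos (by linarith)
  have hfin : ∫ x in Set.Ioi (0:ℝ), rsG q m l x
      = Real.Gamma a * Real.Gamma b / (2*q*Real.Gamma (a+b)) := by
    rw [eq_div_iff (by positivity)]
    field_simp at h1 ⊢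
    linarith [h1]
  rw [hfin]
  congr 2
  rw [ha_def, hb_def]; push_cast; ring

theorem riemann_sum_to_kappa (q : ℝ) (hq : 1/2 < q) (m : ℕ) (l : ℕ) (hl : 1 ≤ l)
    (hl' : 1/(2*q) < (l:ℝ)) :
    Filter.Tendsto
      (fun lam : ℝ => lam ^ (1/(2*q)) *
        ∑' j : ℕ, (lam * Real.pi ^ (2*q) * ((j:ℝ)+1) ^ (2*q)) ^ m /
          (1 + lam * Real.pi ^ (2*q) * ((j:ℝ)+1) ^ (2*q)) ^ (m + l))
      (nhdsWithin 0 (Set.Ioi 0))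
      (nhds (Real.Gamma ((m:ℝ) + 1/(2*q)) * Real.Gamma ((l:ℝ) - 1/(2*q)) /
        (2 * Real.pi * q * Real.Gamma ((l:ℝ) + (m:ℝ))))) := by
  have h2q : (0:ℝ) < 2*q := by linarith
  have hπ : (0:ℝ) < Real.pi := Real.pi_pos
  have hcomp : Tendsto (fun lam : ℝ => Real.pi * lam ^ (1/(2*q)))
      (nhdsWithin 0 (Set.Ioi 0)) (nhdsWithin 0 (Set.Ioi 0)) := by
    apply tendsto_nhdsWithin_of_tendsto_nhds_of_eventually_within
    · have hcont : ContinuousAt (fun lam : ℝ => lam ^ (1/(2*q))) 0 :=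
        Real.continuousAt_rpow_const 0 _ (Or.inr (by positivity))
      have := Filter.Tendsto.const_mul (b := Real.pi)
        (hcont.tendsto.mono_left (nhdsWithin_le_nhds (s := Set.Ioi (0:ℝ))))
      rw [Real.zero_rpow (by positivity), mul_zero] at this
      exact this
    · filter_upwards [self_mem_nhdsWithin] with lam hlam
      have : (0:ℝ) < lam := hlam
      exact Set.mem_Ioi.mpr (by positivity)
  have hmain := ((rs_riemann (m := m) (l := l) hq hl').comp hcomp).const_mul (Real.pi⁻¹)
  have hval : Real.pi⁻¹ * ∫ x in Set.Ioi (0:ℝ), rsG q m l x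
      = Real.Gamma ((m:ℝ) + 1/(2*q)) * Real.Gamma ((l:ℝ) - 1/(2*q)) /
        (2 * Real.pi * q * Real.Gamma ((l:ℝ) + (m:ℝ))) := by
    rw [rs_integral hq hl hl']
    rw [inv_mul_eq_div, div_div]
    congr 1
    ring
  rw [← hval]
  refine hmain.congr' ?_
  filter_upwards [self_mem_nhdsWithin] with lam hlam
  have hlam0 : (0:ℝ) < lam := hlam
  simp only [Function.comp]
  have hterm : ∀ j : ℕ, rsG q m l (((j:ℝ)+1) * (Real.pi * lam ^ (1/(2*q))))
      = (lam * Real.pi ^ (2*q) * ((j:ℝ)+1) ^ (2*q)) ^ m /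
        (1 + lam * Real.pi ^ (2*q) * ((j:ℝ)+1) ^ (2*q)) ^ (m + l) := by
    intro j
    have key : ((((j:ℝ)+1) * (Real.pi * lam ^ (1/(2*q)))) : ℝ) ^ (2*q)
        = lam * Real.pi ^ (2*q) * ((j:ℝ)+1) ^ (2*q) := by
      rw [Real.mul_rpow (by positivity) (by positivity),
        Real.mul_rpow hπ.le (by positivity), ← Real.rpow_mul hlam0.le,
        one_div, inv_mul_cancel₀ h2q.ne', Real.rpow_one]
      ring
    unfold rsG
    rw [key]
  rw [tsum_congr hterm]
  rw [← mul_assoc, ← mul_assoc, inv_mul_cancel₀ hπ.ne', one_mul]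
end

section
/- Let n ≥ 1, let η₁,…,η_n ≥ 0, λ > 0, and let x₁,…,x_n be real numbers. Define T(λ) = (1/n) Σ_i x_i² λ n η_i/(1+λ n η_i)² − (1/n²) (Σ_i x_i² λ n η_i/(1+λ n η_i)) (Σ_i 1/(1+λ n η_i)). Then T(λ) = −(2λ/n²) (Σ_i x_i² λ n η_i/(1+λ n η_i)) · d/dλ [ −(n/2) log(Σ_i x_i² λnη_i/(1+λnη_i)) + (1/2) Σ_i log(λnη_i/(1+λnη_i)) ], provided all η_i > 0 and Σ_i x_i² λnη_i/(1+λnη_i) > 0. -/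
theorem estimating_equation_is_scaled_score (n : ℕ) (hn : 1 ≤ n)
    (η : Fin n → ℝ) (hη : ∀ i, 0 < η i) (x : Fin n → ℝ)
    (ℓ : ℝ → ℝ)
    (hℓ : ∀ lam : ℝ, ℓ lam =
      -((n:ℝ)/2) * Real.log (∑ i, x i ^ 2 * (lam * (n:ℝ) * η i) / (1 + lam * (n:ℝ) * η i)) +
      (1/2) * ∑ i, Real.log ((lam * (n:ℝ) * η i) / (1 + lam * (n:ℝ) * η i)))
    (T : ℝ → ℝ)
    (hT : ∀ lam : ℝ, T lam =
      (1/(n:ℝ)) * ∑ i, x i ^ 2 * (lam * (n:ℝ) * η i) / (1 + lam * (n:ℝ) * η i) ^ 2 -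
      (1/(n:ℝ)^2) * (∑ i, x i ^ 2 * (lam * (n:ℝ) * η i) / (1 + lam * (n:ℝ) * η i)) *
        (∑ i, 1 / (1 + lam * (n:ℝ) * η i)))
    (lam : ℝ) (hlam : 0 < lam)
    (hpos : 0 < ∑ i, x i ^ 2 * (lam * (n:ℝ) * η i) / (1 + lam * (n:ℝ) * η i)) :
    T lam = -(2 * lam / (n:ℝ)^2) *
      (∑ i, x i ^ 2 * (lam * (n:ℝ) * η i) / (1 + lam * (n:ℝ) * η i)) * deriv ℓ lam := by
  have hn0 : (0:ℝ) < n := by exact_mod_cast hn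
  have hD : ∀ i : Fin n, 0 < 1 + lam * (n:ℝ) * η i := by
    intro i; have h1 := hη i; positivity
  have hnum : ∀ i : Fin n, 0 < lam * (n:ℝ) * η i := by
    intro i; have h1 := hη i; positivity
  -- basic derivative building blocks
  have hlin : ∀ i : Fin n, HasDerivAt (fun μ : ℝ => μ * (n:ℝ) * η i) ((n:ℝ) * η i) lam := by
    intro i
    simpa using (((hasDerivAt_id lam).mul_const ((n:ℝ))).mul_const (η i))
  have hden : ∀ i : Fin n, HasDerivAt (fun μ : ℝ => 1 + μ * (n:ℝ) * η i) ((n:ℝ) * η i) lam := by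
    intro i
    simpa using ((hlin i).const_add 1)
  -- derivative of each summand of S
  have hderivS : ∀ i : Fin n, HasDerivAt
      (fun μ : ℝ => x i ^ 2 * (μ * (n:ℝ) * η i) / (1 + μ * (n:ℝ) * η i))
      (x i ^ 2 * ((n:ℝ) * η i) / (1 + lam * (n:ℝ) * η i) ^ 2) lam := by
    intro i
    have h1 : HasDerivAt (fun μ : ℝ => x i ^ 2 * (μ * (n:ℝ) * η i))
        (x i ^ 2 * ((n:ℝ) * η i)) lam := (hlin i).const_mul _
    have h3 : HasDerivAt (fun μ : ℝ => x i ^ 2 * (μ * (n:ℝ) * η i) / (1 + μ * (n:ℝ) * η i)) _ lam :=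
      h1.div (hden i) (hD i).ne'
    convert h3 using 1
    have h2 := (hD i).ne'
    ring
  have hS : HasDerivAt
      (fun μ : ℝ => ∑ i, x i ^ 2 * (μ * (n:ℝ) * η i) / (1 + μ * (n:ℝ) * η i))
      (∑ i, x i ^ 2 * ((n:ℝ) * η i) / (1 + lam * (n:ℝ) * η i) ^ 2) lam :=
    HasDerivAt.fun_sum (fun i _ => hderivS i)
  -- derivative of each log term
  have hlog : ∀ i : Fin n, HasDerivAt
      (fun μ : ℝ => Real.log ((μ * (n:ℝ) * η i) / (1 + μ * (n:ℝ) * η i)))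
      (1 / (lam * (1 + lam * (n:ℝ) * η i))) lam := by
    intro i
    have hq : lam * (n:ℝ) * η i / (1 + lam * (n:ℝ) * η i) ≠ 0 :=
      (div_pos (hnum i) (hD i)).ne'
    have h3 := ((hlin i).div (hden i) (hD i).ne').log hq
    convert h3 using 1
    · rfl
    have h1 := (hnum i).ne'
    have h2 := (hD i).ne'
    rw [Pi.div_apply]
    have h4 := (hη i).ne'
    have h5 := hn0.ne'
    field_simp
    ring
  have hsumlog : HasDerivAt
      (fun μ : ℝ => ∑ i, Real.log ((μ * (n:ℝ) * η i) / (1 + μ * (n:ℝ) * η i)))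
      (∑ i, 1 / (lam * (1 + lam * (n:ℝ) * η i))) lam :=
    HasDerivAt.fun_sum (fun i _ => hlog i)
  -- derivative of ℓ
  have hℓfun : ℓ = fun μ : ℝ =>
      -((n:ℝ)/2) * Real.log (∑ i, x i ^ 2 * (μ * (n:ℝ) * η i) / (1 + μ * (n:ℝ) * η i)) +
      (1/2) * ∑ i, Real.log ((μ * (n:ℝ) * η i) / (1 + μ * (n:ℝ) * η i)) := funext hℓ
  have hL : HasDerivAt ℓ
      (-((n:ℝ)/2) * ((∑ i, x i ^ 2 * ((n:ℝ) * η i) / (1 + lam * (n:ℝ) * η i) ^ 2) /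
          (∑ i, x i ^ 2 * (lam * (n:ℝ) * η i) / (1 + lam * (n:ℝ) * η i))) +
        (1/2) * ∑ i, 1 / (lam * (1 + lam * (n:ℝ) * η i))) lam := by
    rw [hℓfun]
    exact ((hS.log hpos.ne').const_mul _).add (hsumlog.const_mul _)
  rw [hT, hL.deriv]
  -- algebraic identity
  have e1 : (∑ i, x i ^ 2 * (lam * (n:ℝ) * η i) / (1 + lam * (n:ℝ) * η i) ^ 2)
      = lam * ∑ i, x i ^ 2 * ((n:ℝ) * η i) / (1 + lam * (n:ℝ) * η i) ^ 2 := by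
    rw [Finset.mul_sum]
    refine Finset.sum_congr rfl fun i _ => ?_
    ring
  have e2 : (∑ i, 1 / (lam * (1 + lam * (n:ℝ) * η i)))
      = lam⁻¹ * ∑ i, 1 / (1 + lam * (n:ℝ) * η i) := by
    rw [Finset.mul_sum]
    refine Finset.sum_congr rfl fun i _ => ?_
    rw [one_div, one_div, mul_inv]
  rw [e1, e2]
  set S := ∑ i, x i ^ 2 * (lam * (n:ℝ) * η i) / (1 + lam * (n:ℝ) * η i) with hSdef
  set S2 := ∑ i, x i ^ 2 * ((n:ℝ) * η i) / (1 + lam * (n:ℝ) * η i) ^ 2 with hS2def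
  set U := ∑ i, 1 / (1 + lam * (n:ℝ) * η i) with hUdef
  have hSne : S ≠ 0 := hpos.ne'
  have hlamne : lam ≠ 0 := hlam.ne'
  have hnne : (n:ℝ) ≠ 0 := hn0.ne'
  field_simp
  ring
end
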